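/- For the function R(C₁, C₂) = C₁ - C₁² + (2C₁³/3 - C₁²/2)/C₂ on the domain 0 ≤ C₁ ≤ C₂ ≤ 1, the maximum value is 5/24, attained at C₁ = 1/2, C₂ = 1. -/
import Mathlib

theorem direct_selling_max_revenue
    (R : ℝ → ℝ → ℝ)
    (hR : R = fun C₁ C₂ => C₁ - C₁ ^ 2 + (2 * C₁ ^ 3 / 3 - C₁ ^ 2 / 2) / C₂) :
    (∀ C₁ C₂ : ℝ, 0 ≤ C₁ → C₁ ≤ C₂ → C₂ ≤ 1 → R C₁ C₂ ≤ 5 / 24) ∧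
    R (1 / 2) 1 = 5 / 24 := by
  subst hR
  constructor
  · intro C₁ C₂ h0 h1 h2
    simp only
    rcases eq_or_lt_of_le (h0.trans h1) with hc | hc
    · have hC1 : C₁ = 0 := le_antisymm (h1.trans hc.symm.le) h0
      simp [hC1, ← hc]
      norm_num
    · rw [add_comm, ← le_sub_iff_add_le, div_le_iff₀ hc]
      have e1 : (0:ℝ) ≤ (1 - C₂) * (C₁ * (8 * C₁ ^ 2 - 12 * C₁ + 5)) :=
        mul_nonneg (by linarith) (mul_nonneg h0 (by nlinarith [sq_nonneg (4*C₁ - 3)]))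
      have e2 : (0:ℝ) ≤ (C₂ - C₁) * ((1 - 2 * C₁) ^ 2 * (5 - 4 * C₁)) :=
        mul_nonneg (by linarith) (mul_nonneg (sq_nonneg _) (by linarith))
      rcases eq_or_lt_of_le (h1.trans h2 : C₁ ≤ 1) with h3 | h3
      · rw [h3]; nlinarith
      · have key : 24 * (1 - C₁) * ((5 / 24 - (C₁ - C₁ ^ 2)) * C₂ - (2 * C₁ ^ 3 / 3 - C₁ ^ 2 / 2))
            = (1 - C₂) * (C₁ * (8 * C₁ ^ 2 - 12 * C₁ + 5))
              + (C₂ - C₁) * ((1 - 2 * C₁) ^ 2 * (5 - 4 * C₁)) := by ring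
        have h24 : (0:ℝ) < 24 * (1 - C₁) := by linarith
        have hX := (mul_nonneg_iff_of_pos_left h24).mp (key ▸ add_nonneg e1 e2)
        linarith
  · norm_num
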